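/- Assume in addition that C is braided monoidal. Then for all objects x and y of C, the difference endofunctors commute up to natural isomorphism: there is a natural isomorphism δ_x ∘ δ_y ≅ δ_y ∘ δ_x of endofunctors of Fct(C, A). -/

import Mathlib

open CategoryTheory CategoryTheory.Limits CategoryTheory.MonoidalCategory

variable {C : Type*} [Category C] [MonoidalCategory C]
variable {A : Type*} [Category A] [Abelian A]

/-- The translation endofunctor `τ_x` of `Fct(C, A)`: precomposition with `x ⊗ -`. -/
noncomputable def tauF (A : Type*) [Category A] (x : C) : (C ⥤ A) ⥤ (C ⥤ A) :=
  (Functor.whiskeringLeft C C A).obj (tensorLeft x)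

/-- The component `i_x(F) : F ⟶ τ_x F`, whose component at `c` is
`F` applied to `c ≅ 𝟙 ⊗ c ⟶ x ⊗ c`. -/
def iApp (hI : IsInitial (𝟙_ C)) (x : C) (F : C ⥤ A) : F ⟶ tensorLeft x ⋙ F where
  app c := F.map ((λ_ c).inv ≫ hI.to x ▷ c)
  naturality c c' f := by
    dsimp
    rw [← F.map_comp, ← F.map_comp]
    congr 1
    rw [leftUnitor_inv_naturality_assoc, whisker_exchange, Category.assoc]

/-- The natural transformation `i_x : Id ⟶ τ_x` of endofunctors of `Fct(C, A)`. -/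
noncomputable def iNT (hI : IsInitial (𝟙_ C)) (x : C) :
    𝟭 (C ⥤ A) ⟶ tauF A x where
  app F := iApp hI x F
  naturality F G η := by
    ext c
    exact (η.naturality _).symm

/-- The evanescence endofunctor `κ_x = ker(i_x)` of `Fct(C, A)`. -/
noncomputable def kappaF (hI : IsInitial (𝟙_ C)) (x : C) : (C ⥤ A) ⥤ (C ⥤ A) :=
  kernel (iNT (A := A) hI x)

/-- The difference endofunctor `δ_x = coker(i_x)` of `Fct(C, A)`. -/
noncomputable def deltaF (hI : IsInitial (𝟙_ C)) (x : C) : (C ⥤ A) ⥤ (C ⥤ A) :=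
  cokernel (iNT (A := A) hI x)

/-! ### Auxiliary material for `delta_comm_delta` -/

set_option maxHeartbeats 1600000
set_option synthInstance.maxHeartbeats 800000

section Aux

noncomputable instance shortcutAbelian : Abelian ((C ⥤ A) ⥤ (C ⥤ A)) := inferInstance

instance shortcutHasColimWPP : HasColimitsOfShape WalkingParallelPair ((C ⥤ A) ⥤ (C ⥤ A)) :=
  inferInstance

instance shortcutHasBinCoprod : HasBinaryCoproducts ((C ⥤ A) ⥤ (C ⥤ A)) := inferInstance

instance shortcutHasZero : HasZeroMorphisms ((C ⥤ A) ⥤ (C ⥤ A)) := inferInstance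

instance shortcutHasCokernel {F G : (C ⥤ A) ⥤ (C ⥤ A)} (f : F ⟶ G) : HasCokernel f :=
  inferInstance

instance tauF_preservesColimitsOfShape (x : C) :
    PreservesColimitsOfShape WalkingParallelPair (tauF (C := C) A x) :=
  inferInstanceAs (PreservesColimitsOfShape WalkingParallelPair
    ((Functor.whiskeringLeft C C A).obj (tensorLeft x)))

instance tauF_preservesZeroMorphisms (x : C) : (tauF (C := C) A x).PreservesZeroMorphisms :=
  ⟨by intros; ext c; simp [tauF]; rfl⟩

instance whiskeringRight_tauF_preservesZeroMorphisms (x : C) :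
    ((Functor.whiskeringRight (C ⥤ A) (C ⥤ A) (C ⥤ A)).obj (tauF (C := C) A x)).PreservesZeroMorphisms :=
  ⟨by intros; ext F c; simp [tauF]; rfl⟩

/-- `coker(a ≫ π_b) ≅ coker(⟨a, b⟩ : X ⨿ Y ⟶ Z)`. -/
noncomputable def cokernelPrecompPiIso {D : Type*} [Category D] [Abelian D]
    {X Y Z : D} (a : X ⟶ Z) (b : Y ⟶ Z) :
    cokernel (a ≫ cokernel.π b) ≅ cokernel (coprod.desc a b) where
  hom := cokernel.desc _
    (cokernel.desc b (cokernel.π (coprod.desc a b)) (by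
      rw [← coprod.inr_desc_assoc a b (cokernel.π (coprod.desc a b)),
        cokernel.condition, comp_zero]))
    (by
      rw [Category.assoc, cokernel.π_desc,
        ← coprod.inl_desc_assoc a b (cokernel.π (coprod.desc a b)),
        cokernel.condition, comp_zero])
  inv := cokernel.desc _ (cokernel.π b ≫ cokernel.π (a ≫ cokernel.π b)) (by
      apply coprod.hom_ext
      · rw [coprod.inl_desc_assoc, ← Category.assoc, cokernel.condition]; simp
      · rw [coprod.inr_desc_assoc, ← Category.assoc, cokernel.condition]; simp)
  hom_inv_id := by
    apply coequalizer.hom_ext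
    simp only [cokernel.π_desc_assoc, Category.comp_id]
    rw [← cancel_epi (cokernel.π b)]
    simp
  inv_hom_id := by
    apply coequalizer.hom_ext
    simp

variable [BraidedCategory C]

lemma braid_aux₁ (hI : IsInitial (𝟙_ C)) (x y c : C) :
    y ◁ ((λ_ c).inv ≫ hI.to x ▷ c) ≫ (α_ y x c).inv ≫ (β_ y x).hom ▷ c ≫ (α_ x y c).hom
      = (λ_ (y ⊗ c)).inv ≫ hI.to x ▷ (y ⊗ c) := by
  rw [MonoidalCategory.whiskerLeft_comp, Category.assoc,
    associator_inv_naturality_middle_assoc, ← comp_whiskerRight_assoc,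
    BraidedCategory.braiding_naturality_right]
  rw [show (β_ y (𝟙_ C)).hom = (ρ_ y).hom ≫ (λ_ y).inv from by
        rw [← braiding_leftUnitor y]; simp]
  rw [comp_whiskerRight, Category.assoc, associator_naturality_left]
  monoidal

lemma braid_aux₂ (hI : IsInitial (𝟙_ C)) (x y c : C) :
    (λ_ (x ⊗ c)).inv ≫ hI.to y ▷ (x ⊗ c) ≫ (α_ y x c).inv ≫ (β_ y x).hom ▷ c ≫ (α_ x y c).hom
      = x ◁ ((λ_ c).inv ≫ hI.to y ▷ c) := by
  rw [associator_inv_naturality_left_assoc, ← comp_whiskerRight_assoc,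
    BraidedCategory.braiding_naturality_left]
  rw [show (β_ (𝟙_ C) x).hom = (λ_ x).hom ≫ (ρ_ x).inv from by
        rw [← braiding_rightUnitor x]; simp]
  rw [comp_whiskerRight, Category.assoc, associator_naturality_middle,
    MonoidalCategory.whiskerLeft_comp]
  monoidal

/-- The braiding‐induced isomorphism `(x ⊗ -) ⋙ (y ⊗ -) ≅ (y ⊗ -) ⋙ (x ⊗ -)`. -/
noncomputable def braidTensorLeft (x y : C) :
    tensorLeft x ⋙ tensorLeft y ≅ tensorLeft y ⋙ tensorLeft x :=
  NatIso.ofComponents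
    (fun c => (α_ y x c).symm ≪≫ whiskerRightIso (β_ y x) c ≪≫ α_ x y c)
    (by
      intro c c' f
      dsimp
      simp only [whiskerRightIso_hom]
      rw [associator_inv_naturality_right_assoc, whisker_exchange_assoc]
      simp)

/-- The braiding‐induced isomorphism `τ_y ⋙ τ_x ≅ τ_x ⋙ τ_y`. -/
noncomputable def braidTau (x y : C) :
    (tauF (C := C) A y ⋙ tauF A x) ≅ (tauF A x ⋙ tauF A y) :=
  NatIso.ofComponents
    (fun F => Functor.isoWhiskerRight (braidTensorLeft x y) F)
    (by
      intro F G η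
      ext c
      exact (η.naturality _).symm)

variable (hI : IsInitial (𝟙_ C)) (x y : C)

/-- `a : τ_y ⟶ τ_y ⋙ τ_x`, the map `i_x` at `τ_y`. -/
noncomputable def aMap : tauF (C := C) A y ⟶ tauF A y ⋙ tauF A x :=
  (Functor.rightUnitor (tauF A y)).inv ≫ Functor.whiskerLeft (tauF A y) (iNT hI x)

/-- `b : 𝟭 ⋙ τ_x ⟶ τ_y ⋙ τ_x`, the map `τ_x(i_y)`. -/
noncomputable def bMap : (𝟭 (C ⥤ A) ⋙ tauF A x) ⟶ tauF (C := C) A y ⋙ tauF A x :=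
  ((Functor.whiskeringRight (C ⥤ A) (C ⥤ A) (C ⥤ A)).obj (tauF A x)).map (iNT hI y)

/-- `δ_y ⋙ δ_x` is the cokernel of `⟨a, b⟩`. -/
noncomputable def sideIso :
    (deltaF (A := A) hI y ⋙ deltaF hI x) ≅ cokernel (coprod.desc (aMap hI x y) (bMap hI x y)) := by
  let W := (Functor.whiskeringLeft (C ⥤ A) (C ⥤ A) (C ⥤ A)).obj (deltaF (A := A) hI y)
  let P := (Functor.whiskeringRight (C ⥤ A) (C ⥤ A) (C ⥤ A)).obj (tauF (C := C) A x)
  let p : tauF (C := C) A y ⟶ deltaF hI y := cokernel.π (iNT hI y)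
  haveI : Epi p := coequalizer.π_epi
  refine (PreservesCokernel.iso W (iNT hI x)) ≪≫
    (cokernelEpiComp ((Functor.rightUnitor (deltaF (A := A) hI y)).inv) (W.map (iNT hI x))).symm ≪≫
    (cokernelEpiComp p _).symm ≪≫
    cokernelIsoOfEq ?_ ≪≫
    cokernelCompIsIso (aMap hI x y ≫ cokernel.π (P.map (iNT hI y))) (cokernelComparison (iNT hI y) P) ≪≫
    cokernelPrecompPiIso (aMap hI x y) (bMap hI x y)
  -- p ≫ ru.inv ≫ W.map (iNT x) = (a ≫ π (P.map (iNT y))) ≫ comparison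
  rw [Category.assoc, π_comp_cokernelComparison]
  ext F c
  erw [NatTrans.comp_app]
  simpa [p, W, P, aMap, deltaF] using congr_app ((iNT hI x).naturality ((cokernel.π (iNT hI y)).app F)) c

lemma sq1 : aMap (A := A) hI x y ≫ (braidTau x y).hom
    = (Functor.leftUnitor (tauF A y)).inv ≫ bMap hI y x := by
  ext F c
  dsimp [aMap, bMap, braidTensorLeft, iNT, iApp, tauF]
  rw [show ((braidTau (A := A) x y).hom.app F).app c = F.map ((α_ y x c).inv ≫ (β_ y x).hom ▷ c ≫ (α_ x y c).hom) from rfl]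
  simp only [Category.id_comp, ← Functor.map_comp, Category.assoc]
  congr 1
  exact braid_aux₁ hI x y c

lemma sq2 : bMap (A := A) hI x y ≫ (braidTau x y).hom
    = (Functor.leftUnitor (tauF A x)).hom ≫ aMap hI y x := by
  ext F c
  dsimp [aMap, bMap, braidTensorLeft, iNT, iApp, tauF]
  rw [show ((braidTau (A := A) x y).hom.app F).app c = F.map ((α_ y x c).inv ≫ (β_ y x).hom ▷ c ≫ (α_ x y c).hom) from rfl]
  simp only [Category.id_comp, ← Functor.map_comp, Category.assoc]
  congr 1
  exact braid_aux₂ hI x y c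

end Aux

/-- The difference endofunctors commute up to natural isomorphism:
`δ_x ∘ δ_y ≅ δ_y ∘ δ_x`. -/
theorem delta_comm_delta [BraidedCategory C] (hI : IsInitial (𝟙_ C)) (x y : C) :
    Nonempty ((deltaF (A := A) hI y ⋙ deltaF hI x) ≅ (deltaF hI x ⋙ deltaF hI y)) := by
  refine ⟨sideIso hI x y ≪≫
    cokernel.mapIso _ (coprod.desc (aMap hI y x) (bMap hI y x))
      (coprod.braiding _ _ ≪≫
        coprod.mapIso (Functor.leftUnitor (tauF A x)) (Functor.leftUnitor (tauF A y)).symm)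
      (braidTau x y) ?_ ≪≫ (sideIso hI y x).symm⟩
  apply coprod.hom_ext
  · simp only [Iso.trans_hom, coprod.inl_desc_assoc, coprod.braiding_hom, coprod.mapIso_hom,
      Iso.symm_hom, coprod.inl_map_assoc, coprod.inr_map_assoc, coprod.inr_desc,
      coprod.inl_desc, coprod.desc_comp, Category.assoc]
    exact sq1 hI x y
  · simp only [Iso.trans_hom, coprod.inr_desc_assoc, coprod.braiding_hom, coprod.mapIso_hom,
      Iso.symm_hom, coprod.inl_map_assoc, coprod.inr_map_assoc, coprod.inr_desc,
      coprod.inl_desc, coprod.desc_comp, Category.assoc]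
    exact sq2 hI x y
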